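/- Let S and S' be real 2n×2n symplectic matrices with det(S − I) ≠ 0, det(S' − I) ≠ 0 and det(S·S' − I) ≠ 0, and set M = M_S, M' = M_{S'} (so that M + M' is invertible). Then M − (M + ½J)·(M + M')⁻¹·(M − ½J) = ½·J·(S·S' + I)·(S·S' − I)⁻¹ = M_{SS'}. -/
import Mathlib


open Matrix

/-- The standard symplectic matrix `J = [[0, I],[-I, 0]]`. -/
noncomputable def sympJ (n : ℕ) : Matrix (Fin n ⊕ Fin n) (Fin n ⊕ Fin n) ℝ :=
  Matrix.fromBlocks 0 1 (-1) 0

/-- `M_S = ½ J (S + I) (S - I)⁻¹`. -/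
noncomputable def MS {n : ℕ} (S : Matrix (Fin n ⊕ Fin n) (Fin n ⊕ Fin n) ℝ) :
    Matrix (Fin n ⊕ Fin n) (Fin n ⊕ Fin n) ℝ :=
  (1 / 2 : ℝ) • (sympJ n * (S + 1) * (S - 1)⁻¹)

private lemma aux_comm {m : Type*} [Fintype m] [DecidableEq m]
    (A P : Matrix m m ℝ) (h : IsUnit A.det) (hc : A * P = P * A) :
    P * A⁻¹ = A⁻¹ * P := by
  calc P * A⁻¹ = A⁻¹ * (A * (P * A⁻¹)) := (Matrix.nonsing_inv_mul_cancel_left _ _ h).symm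
    _ = A⁻¹ * (P * (A * A⁻¹)) := by rw [← mul_assoc A P A⁻¹, hc, mul_assoc]
    _ = A⁻¹ * P := by rw [Matrix.mul_nonsing_inv _ h, mul_one]

private lemma half_half {m : Type*} [Fintype m] (X : Matrix m m ℝ) :
    (1 / 2 : ℝ) • (X + X) = X := by
  rw [← two_smul ℝ X, smul_smul]; norm_num

/-- for symplectic `S, S'` with `det (S - I) ≠ 0`, `det (S' - I) ≠ 0` and
`det (S S' - I) ≠ 0`, putting `M = M_S`, `M' = M_{S'}`, one has
`M - (M + ½J)(M + M')⁻¹(M - ½J) = ½ J (S S' + I)(S S' - I)⁻¹ = M_{S S'}`. -/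
theorem MS_composition {n : ℕ} (S S' : Matrix (Fin n ⊕ Fin n) (Fin n ⊕ Fin n) ℝ)
    (hS : Sᵀ * sympJ n * S = sympJ n) (hS' : S'ᵀ * sympJ n * S' = sympJ n)
    (hdet : (S - 1).det ≠ 0) (hdet' : (S' - 1).det ≠ 0)
    (hdet'' : (S * S' - 1).det ≠ 0) :
    MS S - (MS S + (1 / 2 : ℝ) • sympJ n) * (MS S + MS S')⁻¹
          * (MS S - (1 / 2 : ℝ) • sympJ n)
      = MS (S * S') := by
  have hA : IsUnit (S - 1).det := isUnit_iff_ne_zero.mpr hdet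
  have hB : IsUnit (S' - 1).det := isUnit_iff_ne_zero.mpr hdet'
  have hC : IsUnit (S * S' - 1).det := isUnit_iff_ne_zero.mpr hdet''
  have hJJ : sympJ n * sympJ n = -1 := by
    simp only [sympJ, Matrix.fromBlocks_multiply]
    rw [show (-1 : Matrix (Fin n ⊕ Fin n) (Fin n ⊕ Fin n) ℝ)
      = Matrix.fromBlocks (-1) (-0) (-0) (-1) by
        rw [← Matrix.fromBlocks_neg, Matrix.fromBlocks_one]]
    simp
  have hnJJ : (-sympJ n) * sympJ n = 1 := by rw [neg_mul, hJJ, neg_neg]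
  have hJinv : (sympJ n)⁻¹ = -sympJ n :=
    Matrix.inv_eq_right_inv (by rw [mul_neg, hJJ, neg_neg])
  have hcomm1 : (S + 1) * (S - 1)⁻¹ = (S - 1)⁻¹ * (S + 1) :=
    aux_comm _ _ hA (by noncomm_ring)
  have hcommS : S * (S - 1)⁻¹ = (S - 1)⁻¹ * S :=
    aux_comm _ _ hA (by noncomm_ring)
  -- sum formula
  have h1 : sympJ n * (S + 1) * (S - 1)⁻¹
      = sympJ n * (S - 1)⁻¹ * ((S + 1) * (S' - 1)) * (S' - 1)⁻¹ := by
    rw [mul_assoc (sympJ n), hcomm1, ← mul_assoc, ← mul_assoc,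
      Matrix.mul_nonsing_inv_cancel_right _ _ hB]
  have h2 : sympJ n * (S' + 1) * (S' - 1)⁻¹
      = sympJ n * (S - 1)⁻¹ * ((S - 1) * (S' + 1)) * (S' - 1)⁻¹ := by
    rw [mul_assoc (sympJ n) (S - 1)⁻¹, Matrix.nonsing_inv_mul_cancel_left _ _ hA]
  have hsum : MS S + MS S' = sympJ n * (S - 1)⁻¹ * (S * S' - 1) * (S' - 1)⁻¹ := by
    rw [MS, MS, h1, h2, ← smul_add]
    have e : sympJ n * (S - 1)⁻¹ * ((S + 1) * (S' - 1)) * (S' - 1)⁻¹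
        + sympJ n * (S - 1)⁻¹ * ((S - 1) * (S' + 1)) * (S' - 1)⁻¹
        = sympJ n * (S - 1)⁻¹ * (S * S' - 1) * (S' - 1)⁻¹
          + sympJ n * (S - 1)⁻¹ * (S * S' - 1) * (S' - 1)⁻¹ := by noncomm_ring
    rw [e, half_half]
  -- inverse of the sum
  have hinv : (MS S + MS S')⁻¹
      = (S' - 1) * ((S * S' - 1)⁻¹ * ((S - 1) * (-sympJ n))) := by
    rw [hsum, Matrix.mul_inv_rev, Matrix.mul_inv_rev, Matrix.mul_inv_rev,
      Matrix.nonsing_inv_nonsing_inv _ hA, Matrix.nonsing_inv_nonsing_inv _ hB, hJinv]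
  -- M + J/2 and M - J/2
  have hplus : MS S + (1 / 2 : ℝ) • sympJ n = sympJ n * S * (S - 1)⁻¹ := by
    rw [MS]
    have e0 : sympJ n = sympJ n * ((S - 1) * (S - 1)⁻¹) := by
      rw [Matrix.mul_nonsing_inv _ hA, mul_one]
    nth_rewrite 2 [e0]
    rw [← smul_add]
    have e : sympJ n * (S + 1) * (S - 1)⁻¹ + sympJ n * ((S - 1) * (S - 1)⁻¹)
        = sympJ n * S * (S - 1)⁻¹ + sympJ n * S * (S - 1)⁻¹ := by noncomm_ring
    rw [e, half_half]
  have hminus : MS S - (1 / 2 : ℝ) • sympJ n = sympJ n * (S - 1)⁻¹ := by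
    rw [MS]
    have e0 : sympJ n = sympJ n * ((S - 1) * (S - 1)⁻¹) := by
      rw [Matrix.mul_nonsing_inv _ hA, mul_one]
    nth_rewrite 2 [e0]
    rw [← smul_sub]
    have e : sympJ n * (S + 1) * (S - 1)⁻¹ - sympJ n * ((S - 1) * (S - 1)⁻¹)
        = sympJ n * (S - 1)⁻¹ + sympJ n * (S - 1)⁻¹ := by noncomm_ring
    rw [e, half_half]
  -- the middle product
  have hmid : sympJ n * S * (S - 1)⁻¹
        * ((S' - 1) * ((S * S' - 1)⁻¹ * ((S - 1) * (-sympJ n))))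
        * (sympJ n * (S - 1)⁻¹)
      = sympJ n * (S - 1)⁻¹ * (S * (S' - 1)) * (S * S' - 1)⁻¹ := by
    have e : sympJ n * S * (S - 1)⁻¹
        * ((S' - 1) * ((S * S' - 1)⁻¹ * ((S - 1) * (-sympJ n))))
        * (sympJ n * (S - 1)⁻¹)
        = sympJ n * (S * ((S - 1)⁻¹ * ((S' - 1) * ((S * S' - 1)⁻¹
          * ((S - 1) * ((-sympJ n) * (sympJ n * (S - 1)⁻¹))))))) := by
      simp only [mul_assoc]
    rw [e, ← mul_assoc (-sympJ n), hnJJ, one_mul, Matrix.mul_nonsing_inv _ hA,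
      mul_one]
    calc sympJ n * (S * ((S - 1)⁻¹ * ((S' - 1) * (S * S' - 1)⁻¹)))
        = sympJ n * (S * (S - 1)⁻¹) * ((S' - 1) * (S * S' - 1)⁻¹) := by
          simp only [mul_assoc]
      _ = sympJ n * ((S - 1)⁻¹ * S) * ((S' - 1) * (S * S' - 1)⁻¹) := by rw [hcommS]
      _ = sympJ n * (S - 1)⁻¹ * (S * (S' - 1)) * (S * S' - 1)⁻¹ := by
          simp only [mul_assoc]
  rw [hplus, hminus, hinv, hmid]
  -- final identity
  have e1 : sympJ n * (S + 1) * (S - 1)⁻¹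
      = sympJ n * (S - 1)⁻¹ * ((S + 1) * (S * S' - 1)) * (S * S' - 1)⁻¹ := by
    rw [mul_assoc (sympJ n), hcomm1, ← mul_assoc, ← mul_assoc,
      Matrix.mul_nonsing_inv_cancel_right _ _ hC]
  have e3 : sympJ n * (S * S' + 1) * (S * S' - 1)⁻¹
      = sympJ n * (S - 1)⁻¹ * ((S - 1) * (S * S' + 1)) * (S * S' - 1)⁻¹ := by
    rw [mul_assoc (sympJ n) (S - 1)⁻¹, Matrix.nonsing_inv_mul_cancel_left _ _ hA]
  rw [MS, MS, e1, e3]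
  have e4 : sympJ n * (S - 1)⁻¹ * (S * (S' - 1)) * (S * S' - 1)⁻¹
      = (1 / 2 : ℝ) • (sympJ n * (S - 1)⁻¹ * (S * (S' - 1)) * (S * S' - 1)⁻¹
        + sympJ n * (S - 1)⁻¹ * (S * (S' - 1)) * (S * S' - 1)⁻¹) :=
    (half_half _).symm
  rw [e4, ← smul_sub]
  congr 1
  noncomm_ring
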